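/- Let (X, μ) be a measure space, 1 < p < ∞, and let η : X → [0, ∞) be measurable with 0 < ∫_X η^p dμ < ∞. Let f : X → ℝ be measurable with ∫_X |f|^p η^p dμ < ∞, and suppose there exists γ ∈ (0, 1) such that ∫_A η^p dμ ≤ γ ∫_X η^p dμ, where A = {x ∈ X : f(x) ≠ 0}. Set f_η = (∫_X f η^p dμ) / (∫_X η^p dμ). Then (∫_X |f|^p η^p dμ)^{1/p} ≤ (1 − γ^{(p−1)/p})^{−1} (∫_X |f − f_η|^p η^p dμ)^{1/p}. -/

import Mathlib

open MeasureTheory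
open scoped ENNReal NNReal

/-- Weighted absorption inequality (Corollary 2.2): if `f` vanishes outside a set `A` with
`∫_A η^p ≤ γ ∫ η^p`, then the weighted `L^p`-norm of `f` is controlled by that of `f - f_η`. -/
theorem weighted_poincare_absorption
    {X : Type*} [MeasurableSpace X] (μ : Measure X)
    (p : ℝ) (hp : 1 < p)
    (η : X → ℝ) (hη_meas : Measurable η) (hη_nonneg : ∀ x, 0 ≤ η x)
    (hηp_int : Integrable (fun x => η x ^ p) μ)
    (hηp_pos : 0 < ∫ x, η x ^ p ∂μ)
    (f : X → ℝ) (hf_meas : Measurable f)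
    (hfp_int : Integrable (fun x => |f x| ^ p * η x ^ p) μ)
    (γ : ℝ) (hγ : γ ∈ Set.Ioo (0 : ℝ) 1)
    (hA : ∫ x in {x | f x ≠ 0}, η x ^ p ∂μ ≤ γ * ∫ x, η x ^ p ∂μ) :
    (∫ x, |f x| ^ p * η x ^ p ∂μ) ^ (1 / p) ≤
      (1 - γ ^ ((p - 1) / p))⁻¹ *
        (∫ x, |f x - (∫ y, f y * η y ^ p ∂μ) / (∫ y, η y ^ p ∂μ)| ^ p * η x ^ p ∂μ) ^ (1 / p) := by
  obtain ⟨hγ0, hγ1⟩ := hγ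
  have hp0 : (0:ℝ) < p := lt_trans one_pos hp
  have hpq : p.HolderConjugate (p / (p - 1)) := (Real.holderConjugate_iff_eq_conjExponent hp).mpr rfl
  set q : ℝ := p / (p - 1) with hq_def
  have hq0 : 0 < q := hpq.symm.pos
  have h1q : 1 / q = (p - 1) / p := by rw [hq_def, one_div_div]
  set I : ℝ := ∫ x, η x ^ p ∂μ with hI_def
  set S : ℝ := ∫ y, f y * η y ^ p ∂μ with hS_def
  set c : ℝ := S / I with hc_def
  have hI0 : (0:ℝ) < I := hηp_pos
  have hηn : ∀ x, 0 ≤ η x ^ p := fun x => Real.rpow_nonneg (hη_nonneg x) p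
  have hA_meas : MeasurableSet {x | f x ≠ 0} := (hf_meas (measurableSet_singleton 0)).compl
  set EI : ℝ≥0∞ := ENNReal.ofReal I with hEI_def
  have hEI0 : EI ≠ 0 := (ENNReal.ofReal_pos.mpr hI0).ne'
  have hEItop : EI ≠ ⊤ := ENNReal.ofReal_ne_top
  set F : X → ℝ≥0∞ := fun x => ENNReal.ofReal (|f x| * η x) with hF_def
  set Fc : X → ℝ≥0∞ := fun x => ENNReal.ofReal (|f x - c| * η x) with hFc_def
  set K : X → ℝ≥0∞ := fun x => ENNReal.ofReal (|c| * η x) with hK_def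
  have hF_meas : Measurable F := (hf_meas.abs.mul hη_meas).ennreal_ofReal
  have hFc_meas : Measurable Fc :=
    (((hf_meas.sub measurable_const).abs).mul hη_meas).ennreal_ofReal
  have hK_meas : Measurable K := (measurable_const.mul hη_meas).ennreal_ofReal
  set L : ℝ≥0∞ := ∫⁻ x, F x ^ p ∂μ with hL_def
  set R : ℝ≥0∞ := ∫⁻ x, Fc x ^ p ∂μ with hR_def
  -- pointwise identities for the p-th powers
  have hFp : ∀ x, F x ^ p = ENNReal.ofReal (|f x| ^ p * η x ^ p) := fun x => by
    rw [hF_def]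
    rw [ENNReal.ofReal_rpow_of_nonneg (mul_nonneg (abs_nonneg _) (hη_nonneg x)) hp0.le,
      Real.mul_rpow (abs_nonneg _) (hη_nonneg x)]
  have hFcp : ∀ x, Fc x ^ p = ENNReal.ofReal (|f x - c| ^ p * η x ^ p) := fun x => by
    rw [hFc_def]
    rw [ENNReal.ofReal_rpow_of_nonneg (mul_nonneg (abs_nonneg _) (hη_nonneg x)) hp0.le,
      Real.mul_rpow (abs_nonneg _) (hη_nonneg x)]
  have hL_eq : L = ENNReal.ofReal (∫ x, |f x| ^ p * η x ^ p ∂μ) := by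
    rw [hL_def]
    simp_rw [hFp]
    exact (ofReal_integral_eq_lintegral_ofReal hfp_int
      (Filter.Eventually.of_forall fun x => mul_nonneg (by positivity) (hηn x))).symm
  have hL_top : L ≠ ⊤ := by rw [hL_eq]; exact ENNReal.ofReal_ne_top
  have hEI_lint : ∫⁻ x, ENNReal.ofReal (η x ^ p) ∂μ = EI :=
    (ofReal_integral_eq_lintegral_ofReal hηp_int (Filter.Eventually.of_forall hηn)).symm
  -- the Hölder step
  set G : X → ℝ≥0∞ :=
    Set.indicator {x | f x ≠ 0} (fun x => ENNReal.ofReal (η x ^ (p - 1))) with hG_def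
  have hG_meas : Measurable G :=
    ((hη_meas.pow_const (p - 1)).ennreal_ofReal).indicator hA_meas
  have hFG : ∀ x, (F * G) x = ENNReal.ofReal (|f x| * η x ^ p) := by
    intro x
    by_cases hx : f x = 0
    · have hxA : x ∉ {x | f x ≠ 0} := by simp [hx]
      simp [hF_def, hG_def, Set.indicator_of_notMem hxA, hx]
    · have hxA : x ∈ {x | f x ≠ 0} := hx
      simp only [Pi.mul_apply, hG_def, Set.indicator_of_mem hxA, hF_def]
      rw [← ENNReal.ofReal_mul (mul_nonneg (abs_nonneg _) (hη_nonneg x))]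
      congr 1
      rw [mul_assoc]
      congr 1
      have hne : (1:ℝ) + (p - 1) ≠ 0 := by
        intro h; exact hp0.ne' (by linarith)
      calc η x * η x ^ (p - 1) = η x ^ (1:ℝ) * η x ^ (p - 1) := by rw [Real.rpow_one]
        _ = η x ^ ((1:ℝ) + (p - 1)) := (Real.rpow_add' (hη_nonneg x) hne).symm
        _ = η x ^ p := by ring_nf
  have hGq : ∀ x, G x ^ q
      = Set.indicator {x | f x ≠ 0} (fun x => ENNReal.ofReal (η x ^ p)) x := by
    intro x
    by_cases hxA : x ∈ {x | f x ≠ 0}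
    · simp only [hG_def, Set.indicator_of_mem hxA]
      rw [ENNReal.ofReal_rpow_of_nonneg (Real.rpow_nonneg (hη_nonneg x) _) hq0.le,
        ← Real.rpow_mul (hη_nonneg x), hpq.sub_one_mul_conj]
    · simp [hG_def, Set.indicator_of_notMem hxA, ENNReal.zero_rpow_of_pos hq0]
  have hGq_int : ∫⁻ x, G x ^ q ∂μ ≤ ENNReal.ofReal (γ * I) := by
    simp_rw [hGq]
    rw [lintegral_indicator hA_meas]
    rw [← ofReal_integral_eq_lintegral_ofReal (hηp_int.restrict)
      (Filter.Eventually.of_forall hηn)]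
    exact ENNReal.ofReal_le_ofReal hA
  have holder : ENNReal.ofReal |c| * EI ≤ L ^ (1/p) * ENNReal.ofReal (γ * I) ^ (1/q) := by
    have hcI : |c| * I = |S| := by
      rw [hc_def, abs_div, abs_of_pos hI0, div_mul_cancel₀ _ hI0.ne']
    have h1 : ENNReal.ofReal |c| * EI ≤ ∫⁻ x, ENNReal.ofReal (|f x| * η x ^ p) ∂μ := by
      rw [hEI_def, ← ENNReal.ofReal_mul (abs_nonneg c), hcI]
      calc ENNReal.ofReal |S| = (‖S‖₊ : ℝ≥0∞) := by
            rw [← Real.norm_eq_abs]; exact ofReal_norm S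
        _ ≤ ∫⁻ y, (‖f y * η y ^ p‖₊ : ℝ≥0∞) ∂μ := enorm_integral_le_lintegral_enorm _
        _ = ∫⁻ y, ENNReal.ofReal (|f y| * η y ^ p) ∂μ := by
            congr 1
            funext y
            rw [show ((‖f y * η y ^ p‖₊ : ℝ≥0∞)) = ENNReal.ofReal ‖f y * η y ^ p‖ from (ofReal_norm _).symm, Real.norm_eq_abs, abs_mul, abs_of_nonneg (hηn y)]
    refine h1.trans ?_
    have h2 := ENNReal.lintegral_mul_le_Lp_mul_Lq μ hpq hF_meas.aemeasurable hG_meas.aemeasurable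
    simp_rw [hFG] at h2
    refine h2.trans ?_
    exact mul_le_mul_right (ENNReal.rpow_le_rpow hGq_int (by positivity)) _
  -- the K term
  have hKp : ∫⁻ x, K x ^ p ∂μ = ENNReal.ofReal |c| ^ p * EI := by
    have e : ∀ x, K x ^ p = ENNReal.ofReal |c| ^ p * ENNReal.ofReal (η x ^ p) := fun x => by
      rw [hK_def]
      dsimp only
      rw [ENNReal.ofReal_mul (abs_nonneg c), ENNReal.mul_rpow_of_nonneg _ _ hp0.le,
        ENNReal.ofReal_rpow_of_nonneg (hη_nonneg x) hp0.le]
    simp_rw [e]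
    rw [lintegral_const_mul' _ _
      (ENNReal.rpow_ne_top_of_nonneg hp0.le ENNReal.ofReal_ne_top), hEI_lint]
  have hKp' : (∫⁻ x, K x ^ p ∂μ) ^ (1/p) = ENNReal.ofReal |c| * EI ^ (1/p) := by
    rw [hKp, ENNReal.mul_rpow_of_nonneg _ _ (by positivity), ← ENNReal.rpow_mul,
      mul_one_div_cancel hp0.ne', ENNReal.rpow_one]
  -- Minkowski, both directions
  have mink1 : L ^ (1/p) ≤ R ^ (1/p) + ENNReal.ofReal |c| * EI ^ (1/p) := by
    have hpt : ∀ x, F x ≤ (Fc + K) x := fun x => by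
      simp only [Pi.add_apply, hF_def, hFc_def, hK_def]
      rw [← ENNReal.ofReal_add (mul_nonneg (abs_nonneg _) (hη_nonneg x))
        (mul_nonneg (abs_nonneg _) (hη_nonneg x))]
      apply ENNReal.ofReal_le_ofReal
      rw [← add_mul]
      refine mul_le_mul_of_nonneg_right ?_ (hη_nonneg x)
      calc |f x| = |(f x - c) + c| := by ring_nf
        _ ≤ |f x - c| + |c| := abs_add_le _ _
    have h1 : L ^ (1/p) ≤ (∫⁻ x, (Fc + K) x ^ p ∂μ) ^ (1/p) :=
      ENNReal.rpow_le_rpow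
        (lintegral_mono fun x => ENNReal.rpow_le_rpow (hpt x) hp0.le) (by positivity)
    refine h1.trans ?_
    have h2 := ENNReal.lintegral_Lp_add_le (μ := μ) hFc_meas.aemeasurable hK_meas.aemeasurable hp.le
    rw [hKp'] at h2
    exact h2
  have mink2 : R ^ (1/p) ≤ L ^ (1/p) + ENNReal.ofReal |c| * EI ^ (1/p) := by
    have hpt : ∀ x, Fc x ≤ (F + K) x := fun x => by
      simp only [Pi.add_apply, hF_def, hFc_def, hK_def]
      rw [← ENNReal.ofReal_add (mul_nonneg (abs_nonneg _) (hη_nonneg x))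
        (mul_nonneg (abs_nonneg _) (hη_nonneg x))]
      apply ENNReal.ofReal_le_ofReal
      rw [← add_mul]
      exact mul_le_mul_of_nonneg_right (abs_sub _ _) (hη_nonneg x)
    have h1 : R ^ (1/p) ≤ (∫⁻ x, (F + K) x ^ p ∂μ) ^ (1/p) :=
      ENNReal.rpow_le_rpow
        (lintegral_mono fun x => ENNReal.rpow_le_rpow (hpt x) hp0.le) (by positivity)
    refine h1.trans ?_
    have h2 := ENNReal.lintegral_Lp_add_le (μ := μ) hF_meas.aemeasurable hK_meas.aemeasurable hp.le
    rw [hKp'] at h2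
    exact h2
  have hLp_top : L ^ (1/p) ≠ ⊤ := by
    exact ENNReal.rpow_ne_top_of_nonneg (by positivity) hL_top
  have hcEI_top : ENNReal.ofReal |c| * EI ^ (1/p) ≠ ⊤ :=
    ENNReal.mul_ne_top ENNReal.ofReal_ne_top
      (ENNReal.rpow_ne_top_of_nonneg (by positivity) hEItop)
  have hRp_top : R ^ (1/p) ≠ ⊤ := by
    intro h
    rw [h] at mink2
    exact (ENNReal.add_ne_top.mpr ⟨hLp_top, hcEI_top⟩) (top_le_iff.mp mink2)
  have hR_top : R ≠ ⊤ := by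
    intro h
    apply hRp_top
    rw [h, ENNReal.top_rpow_of_pos (by positivity)]
  -- combine
  set g : ℝ≥0∞ := ENNReal.ofReal γ ^ (1/q) with hg_def
  have hγI : ENNReal.ofReal (γ * I) ^ (1/q) = g * EI ^ (1/q) := by
    rw [ENNReal.ofReal_mul hγ0.le, ENNReal.mul_rpow_of_nonneg _ _ (by positivity), hg_def]
  have key : L ^ (1/p) ≤ R ^ (1/p) + L ^ (1/p) * g := by
    have hq_ne0 : EI ^ (1/q) ≠ 0 := (ENNReal.rpow_pos (ENNReal.ofReal_pos.mpr hI0) hEItop).ne'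
    have hq_netop : EI ^ (1/q) ≠ ⊤ := ENNReal.rpow_ne_top_of_nonneg (by positivity) hEItop
    rw [← ENNReal.mul_le_mul_iff_left hq_ne0 hq_netop]
    calc L ^ (1/p) * EI ^ (1/q)
        ≤ (R ^ (1/p) + ENNReal.ofReal |c| * EI ^ (1/p)) * EI ^ (1/q) :=
          mul_le_mul_left mink1 _
      _ = R ^ (1/p) * EI ^ (1/q) + ENNReal.ofReal |c| * EI := by
          rw [add_mul, mul_assoc, ← ENNReal.rpow_add _ _ hEI0 hEItop]
          congr 2
          rw [show 1/p + 1/q = 1 by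
            rw [one_div, one_div]; exact hpq.inv_add_inv_eq_one, ENNReal.rpow_one]
      _ ≤ R ^ (1/p) * EI ^ (1/q) + L ^ (1/p) * (g * EI ^ (1/q)) := by
          refine add_le_add_right ?_ _
          rw [← hγI]
          exact holder
      _ = (R ^ (1/p) + L ^ (1/p) * g) * EI ^ (1/q) := by
          rw [add_mul, mul_assoc]
  -- pass to the reals
  set gr : ℝ := γ ^ ((p - 1) / p) with hgr_def
  have hg_toReal : g.toReal = gr := by
    rw [hg_def, ENNReal.ofReal_rpow_of_nonneg hγ0.le (one_div_pos.mpr hq0).le,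
      ENNReal.toReal_ofReal (Real.rpow_nonneg hγ0.le _), h1q]
  have hgr1 : gr < 1 := Real.rpow_lt_one hγ0.le hγ1 (div_pos (by linarith) hp0)
  have hgr0 : 0 ≤ gr := Real.rpow_nonneg hγ0.le _
  set a : ℝ := (L ^ (1/p)).toReal with ha_def
  set b : ℝ := (R ^ (1/p)).toReal with hb_def
  have hg_top : g ≠ ⊤ := ENNReal.rpow_ne_top_of_nonneg (by positivity) ENNReal.ofReal_ne_top
  have hrhs_top : R ^ (1/p) + L ^ (1/p) * g ≠ ⊤ :=
    ENNReal.add_ne_top.mpr ⟨hRp_top, ENNReal.mul_ne_top hLp_top hg_top⟩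
  have areal : a ≤ b + a * gr := by
    have h := ENNReal.toReal_mono hrhs_top key
    rwa [ENNReal.toReal_add hRp_top (ENNReal.mul_ne_top hLp_top hg_top),
      ENNReal.toReal_mul, hg_toReal] at h
  have hfinal : a ≤ (1 - gr)⁻¹ * b := by
    have h1g : 0 < 1 - gr := by linarith
    rw [← div_eq_inv_mul, le_div_iff₀ h1g]
    nlinarith
  -- identify a and b with the goal
  have hLHS : (∫ x, |f x| ^ p * η x ^ p ∂μ) ^ (1/p) = a := by
    rw [ha_def, ← ENNReal.toReal_rpow, hL_eq,
      ENNReal.toReal_ofReal (integral_nonneg fun x => mul_nonneg (by positivity) (hηn x))]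
  have hRHS : (∫ x, |f x - c| ^ p * η x ^ p ∂μ) ^ (1/p) = b := by
    have hmeas : AEStronglyMeasurable (fun x => |f x - c| ^ p * η x ^ p) μ :=
      (((hf_meas.sub measurable_const).abs.pow_const p).mul
        (hη_meas.pow_const p)).aestronglyMeasurable
    have : ∫ x, |f x - c| ^ p * η x ^ p ∂μ = R.toReal := by
      rw [integral_eq_lintegral_of_nonneg_ae
        (Filter.Eventually.of_forall fun x => mul_nonneg (by positivity) (hηn x)) hmeas]
      congr 1
      rw [hR_def]
      refine lintegral_congr fun x => ?_
      rw [hFcp]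
    rw [hb_def, ← ENNReal.toReal_rpow, this]
  rw [hLHS, hRHS]
  exact hfinal
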